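/- A CLF V and CBF h are compatible (i.e., for all x with h(x) ≥ 0 and V(x) ≤ 1 there exists u with Au ≤ c, L_fV(x) + L_gV(x)u ≤ -κ_V(V(x)), and L_fh(x) + L_gh(x)u ≥ -κ_h(h(x))) if and only if the set {(x, z) | h(x) ≥ 0, V(x) ≤ 1, z ≥ 0, zᵀΛ(x) = 0, ξ(x)ᵀz = -1} is empty, where Λ(x) stacks L_gV(x), -L_gh(x), and A, and ξ(x) stacks -κ_V(V(x)) - L_fV(x), κ_h(h(x)) + L_fh(x), and c. -/

import Mathlib

open Matrix Finset

variable {E : Type*} [AddCommGroup E] [Module ℝ E] {ι : Type*} [Fintype ι] [DecidableEq ι]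

/-- The cone generated by a finite family of vectors. -/
def coneOf (v : ι → E) : Set E :=
  {x | ∃ c : ι → ℝ, (∀ i, 0 ≤ c i) ∧ ∑ i, c i • v i = x}

lemma cone_caratheodory_aux (v : ι → E) :
    ∀ (N : ℕ) (s : Finset ι) (c : ι → ℝ), s.card ≤ N → (∀ i, 0 ≤ c i) → (∀ i ∉ s, c i = 0) →
    ∃ (s' : Finset ι) (c' : ι → ℝ), LinearIndependent ℝ (fun i : s' => v i) ∧
      (∀ i, 0 ≤ c' i) ∧ (∀ i ∉ s', c' i = 0) ∧ ∑ i, c' i • v i = ∑ i, c i • v i := by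
  classical
  intro N
  induction N with
  | zero =>
    intro s c hcard hc0 hcs
    have hs : s = ∅ := Finset.card_eq_zero.mp (Nat.le_zero.mp hcard)
    subst hs
    refine ⟨∅, c, ?_, hc0, hcs, rfl⟩
    haveI : IsEmpty ((∅ : Finset ι) : Type _) := ⟨fun x => (Finset.notMem_empty _ x.2)⟩
    exact linearIndependent_empty_type
  | succ N ih =>
    intro s c hcard hc0 hcs
    by_cases hli : LinearIndependent ℝ (fun i : s => v i)
    · exact ⟨s, c, hli, hc0, hcs, rfl⟩
    · obtain ⟨g, hgsum, i₁, hgi₁⟩ := Fintype.not_linearIndependent_iff.mp hli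
      -- make sure some coefficient is positive
      set g1 : s → ℝ := if ∃ i, 0 < g i then g else -g with hg1
      have hg1sum : ∑ i : s, g1 i • v i = 0 := by
        rw [hg1]; split
        · exact hgsum
        · simp only [Pi.neg_apply, neg_smul, Finset.sum_neg_distrib, hgsum, neg_zero]
      have hg1pos : ∃ i, 0 < g1 i := by
        rw [hg1]; split
        · assumption
        · rename_i hno
          push_neg at hno
          exact ⟨i₁, by simpa using lt_of_le_of_ne (hno i₁) hgi₁⟩
      -- extend to ι
      set G : ι → ℝ := fun i => if h : i ∈ s then g1 ⟨i, h⟩ else 0 with hG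
      have hGsum : ∑ i, G i • v i = 0 := by
        rw [← hg1sum]
        rw [← Finset.sum_subset (Finset.subset_univ s)
          (by intro i _ hi; simp [hG, hi])]
        rw [← Finset.sum_attach s (fun i => G i • v i)]
        refine Finset.sum_congr rfl fun i _ => ?_
        simp [hG, i.2]
      set P : Finset ι := Finset.univ.filter (fun i => 0 < G i) with hP
      have hPne : P.Nonempty := by
        obtain ⟨i, hi⟩ := hg1pos
        exact ⟨i, by simp [hP, hG, i.2, hi]⟩
      have hPs : ∀ i ∈ P, i ∈ s := by
        intro i hi
        simp only [hP, Finset.mem_filter] at hi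
        by_contra hns
        simp [hG, hns] at hi
      set t : ℝ := P.inf' hPne (fun i => c i / G i) with ht
      obtain ⟨i₀, hi₀P, hi₀eq⟩ := Finset.exists_mem_eq_inf' hPne (fun i => c i / G i)
      have hGi₀ : 0 < G i₀ := by simpa [hP] using hi₀P
      have ht0 : 0 ≤ t := by
        rw [ht]
        apply Finset.le_inf'
        intro b hb
        have : 0 < G b := by simpa [hP] using hb
        exact div_nonneg (hc0 b) this.le
      set c' : ι → ℝ := fun i => c i - t * G i with hc'
      have hc'0 : ∀ i, 0 ≤ c' i := by
        intro i
        by_cases hpos : 0 < G i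
        · have hiP : i ∈ P := by simp [hP, hpos]
          have : t ≤ c i / G i := by rw [ht]; exact Finset.inf'_le _ hiP
          have := (le_div_iff₀ hpos).mp this
          simp only [hc']; linarith
        · push_neg at hpos
          have : t * G i ≤ 0 := mul_nonpos_of_nonneg_of_nonpos ht0 hpos
          simp only [hc']; linarith [hc0 i]
      have hc'i₀ : c' i₀ = 0 := by
        simp only [hc', ← hi₀eq, ht]
        rw [hi₀eq, div_mul_cancel₀ _ hGi₀.ne']
        ring
      have hc's : ∀ i ∉ s.erase i₀, c' i = 0 := by
        intro i hi
        by_cases hii : i = i₀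
        · subst hii; exact hc'i₀
        · have hns : i ∉ s := fun hmem => hi (Finset.mem_erase.mpr ⟨hii, hmem⟩)
          simp [hc', hcs i hns, hG, hns]
      have hsum : ∑ i, c' i • v i = ∑ i, c i • v i := by
        simp only [hc', sub_smul, Finset.sum_sub_distrib, mul_smul, ← Finset.smul_sum,
          hGsum, smul_zero, sub_zero]
      have hcard' : (s.erase i₀).card ≤ N := by
        have := Finset.card_erase_of_mem (hPs i₀ hi₀P)
        omega
      obtain ⟨s', c'', h1, h2, h3, h4⟩ := ih (s.erase i₀) c' hcard' hc'0 hc's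
      exact ⟨s', c'', h1, h2, h3, h4.trans hsum⟩

section Closed

variable {E : Type*} [NormedAddCommGroup E] [InnerProductSpace ℝ E] [FiniteDimensional ℝ E]
variable {ι : Type*} [Fintype ι] [DecidableEq ι]

lemma coneOf_li_isClosed (v : ι → E) (hv : LinearIndependent ℝ v) :
    IsClosed (coneOf v) := by
  let L : EuclideanSpace ℝ ι →ₗ[ℝ] E :=
    { toFun := fun c => ∑ i, c i • v i
      map_add' := by
        intro a b
        simp [add_smul, Finset.sum_add_distrib]
      map_smul' := by
        intro r a
        simp [mul_smul, ← Finset.smul_sum] }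
  have hker : LinearMap.ker L = ⊥ := by
    rw [LinearMap.ker_eq_bot']
    intro m hm
    have := Fintype.linearIndependent_iff.mp hv m hm
    ext i
    exact this i
  have hmap : IsClosedMap L := (LinearMap.isClosedEmbedding_of_injective hker).isClosedMap
  have himg : coneOf v = L '' {c : EuclideanSpace ℝ ι | ∀ i, 0 ≤ c i} := by
    ext x
    constructor
    · rintro ⟨c, hc0, rfl⟩; exact ⟨WithLp.toLp 2 c, hc0, rfl⟩
    · rintro ⟨c, hc0, rfl⟩; exact ⟨c, hc0, rfl⟩
  rw [himg]
  apply hmap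
  have : {c : EuclideanSpace ℝ ι | ∀ i, 0 ≤ c i} = ⋂ i, {c | 0 ≤ c i} := by
    ext c; simp [Set.mem_iInter]
  rw [this]
  exact isClosed_iInter fun i =>
    IsClosed.preimage (EuclideanSpace.proj (𝕜 := ℝ) i).continuous isClosed_Ici

lemma coneOf_sub_mem (v : ι → E) (s : Finset ι) {x : E}
    (hx : x ∈ coneOf (fun i : s => v i)) : x ∈ coneOf v := by
  obtain ⟨c, hc0, rfl⟩ := hx
  classical
  refine ⟨fun i => if h : i ∈ s then c ⟨i, h⟩ else 0, ?_, ?_⟩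
  · intro i; by_cases h : i ∈ s <;> simp [h, hc0]
  rw [← Finset.sum_subset (Finset.subset_univ s) (by intro i _ hi; simp [hi])]
  rw [← Finset.sum_attach s (fun i => (if h : i ∈ s then c ⟨i, h⟩ else 0) • v i)]
  refine Finset.sum_congr rfl fun i _ => by simp [i.2]

lemma coneOf_eq_union (v : ι → E) :
    coneOf v = ⋃ (s : Finset ι) (_ : LinearIndependent ℝ (fun i : s => v i)),
      coneOf (fun i : s => v i) := by
  classical
  ext x
  constructor
  · rintro ⟨c, hc0, rfl⟩
    obtain ⟨s', c', hli, hc'0, hc's, hsum⟩ :=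
      cone_caratheodory_aux v (Finset.univ.card) Finset.univ c le_rfl hc0 (by simp)
    refine Set.mem_iUnion.mpr ⟨s', Set.mem_iUnion.mpr ⟨hli, ?_⟩⟩
    refine ⟨fun i => c' i, fun i => hc'0 i, ?_⟩
    rw [← hsum]
    rw [← Finset.sum_subset (Finset.subset_univ s') (by intro i _ hi; simp [hc's i hi])]
    rw [← Finset.sum_attach s' (fun i => c' i • v i)]
    rfl
  · intro hx
    obtain ⟨s, hs⟩ := Set.mem_iUnion.mp hx
    obtain ⟨_, hmem⟩ := Set.mem_iUnion.mp hs
    exact coneOf_sub_mem v s hmem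

lemma coneOf_isClosed (v : ι → E) : IsClosed (coneOf v) := by
  classical
  rw [coneOf_eq_union v]
  refine isClosed_iUnion_of_finite fun s => ?_
  by_cases hli : LinearIndependent ℝ (fun i : s => v i)
  · simpa [hli] using coneOf_li_isClosed _ hli
  · simp [hli]

open scoped InnerProductSpace in
lemma cone_farkas [CompleteSpace E] (v : ι → E) (q : E) (hq : q ∉ coneOf v) :
    ∃ y : E, (∀ i, 0 ≤ ⟪v i, y⟫_ℝ) ∧ ⟪y, q⟫_ℝ < 0 := by
  classical
  let K : ConvexCone ℝ E :=
    { carrier := coneOf v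
      smul_mem' := by
        rintro r hr x ⟨c, hc0, rfl⟩
        exact ⟨fun i => r * c i, fun i => mul_nonneg hr.le (hc0 i), by
          simp [mul_smul, ← Finset.smul_sum]⟩
      add_mem' := by
        rintro x ⟨c, hc0, rfl⟩ y ⟨d, hd0, rfl⟩
        exact ⟨fun i => c i + d i, fun i => add_nonneg (hc0 i) (hd0 i), by
          simp [add_smul, Finset.sum_add_distrib]⟩ }
  have h0 : (0 : E) ∈ K := ⟨fun _ => 0, fun _ => le_rfl, by simp⟩
  let C : ProperCone ℝ E :=
    { carrier := coneOf v
      add_mem' := fun ha hb => K.add_mem' ha hb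
      zero_mem' := h0
      smul_mem' := by
        rintro r x ⟨c, hc0, rfl⟩
        exact ⟨fun i => (r : ℝ) * c i, fun i => mul_nonneg r.2 (hc0 i), by
          show _ = (r : ℝ) • ∑ i, c i • v i
          simp [mul_smul, ← Finset.smul_sum]⟩
      isClosed' := coneOf_isClosed v }
  obtain ⟨y, hy1, hy2⟩ := ProperCone.hyperplane_separation' C (x₀ := q) (show q ∉ C from hq)
  refine ⟨y, fun i => ?_, by rwa [real_inner_comm]⟩
  apply hy1
  show v i ∈ coneOf v
  refine ⟨fun j => if j = i then 1 else 0, ?_, by simp⟩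
  intro j; by_cases hji : j = i <;> simp [hji]

end Closed

open scoped InnerProductSpace

/-- Farkas' lemma, inequality form. -/
theorem farkas_mulVec {n : ℕ} {ι : Type*} [Fintype ι] [DecidableEq ι]
    (M : Matrix ι (Fin n) ℝ) (b : ι → ℝ) :
    (∃ u : Fin n → ℝ, ∀ i, M.mulVec u i ≤ b i) ↔
      ¬ ∃ z : ι → ℝ, (∀ i, 0 ≤ z i) ∧ Matrix.vecMul z M = 0 ∧ b ⬝ᵥ z = -1 := by
  classical
  constructor
  · rintro ⟨u, hu⟩ ⟨z, hz0, hzM, hbz⟩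
    have h1 : z ⬝ᵥ M.mulVec u ≤ z ⬝ᵥ b := by
      apply Finset.sum_le_sum
      intro i _
      exact mul_le_mul_of_nonneg_left (hu i) (hz0 i)
    rw [Matrix.dotProduct_mulVec, hzM] at h1
    simp only [zero_dotProduct] at h1
    rw [dotProduct_comm, hbz] at h1
    linarith
  · intro hnz
    -- generators in `EuclideanSpace ℝ (Fin n ⊕ Unit)`
    set v : ι → EuclideanSpace ℝ (Fin n ⊕ Unit) :=
      fun i => WithLp.toLp 2 (Sum.elim (M i) (fun _ => b i)) with hv
    set q : EuclideanSpace ℝ (Fin n ⊕ Unit) := WithLp.toLp 2 (Sum.elim 0 (fun _ => -1)) with hqdef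
    have hq : q ∉ coneOf v := by
      rintro ⟨c, hc0, hc⟩
      refine hnz ⟨c, hc0, ?_, ?_⟩
      · funext j
        have := congrArg (fun w => w (Sum.inl j)) hc
        simp only [hqdef, PiLp.toLp_apply, Sum.elim_inl, Pi.zero_apply] at this
        rw [show ((∑ i, c i • v i : EuclideanSpace ℝ (Fin n ⊕ Unit)) (Sum.inl j))
            = ∑ i, c i * M i j from ?_] at this
        · simpa [Matrix.vecMul, dotProduct] using this
        · rw [show ((∑ i, c i • v i : EuclideanSpace ℝ (Fin n ⊕ Unit)) (Sum.inl j))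
              = ∑ i, (c i • v i : EuclideanSpace ℝ (Fin n ⊕ Unit)) (Sum.inl j) from ?_]
          · refine Finset.sum_congr rfl fun i _ => ?_
            simp [hv]
          · rw [WithLp.ofLp_sum]; exact Finset.sum_apply _ _ _
      · have := congrArg (fun w => w (Sum.inr ())) hc
        simp only [hqdef, PiLp.toLp_apply, Sum.elim_inr] at this
        rw [show ((∑ i, c i • v i : EuclideanSpace ℝ (Fin n ⊕ Unit)) (Sum.inr ()))
            = ∑ i, c i * b i from ?_] at this
        · rw [dotProduct_comm]
          simpa [dotProduct] using this
        · rw [show ((∑ i, c i • v i : EuclideanSpace ℝ (Fin n ⊕ Unit)) (Sum.inr ()))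
              = ∑ i, (c i • v i : EuclideanSpace ℝ (Fin n ⊕ Unit)) (Sum.inr ()) from
              by rw [WithLp.ofLp_sum]; exact Finset.sum_apply _ _ _]
          refine Finset.sum_congr rfl fun i _ => ?_
          simp [hv]
    obtain ⟨y, hy1, hy2⟩ := cone_farkas v q hq
    -- decompose y
    set t : ℝ := y (Sum.inr ()) with htdef
    have hyq : ⟪y, q⟫_ℝ = -t := by
      rw [PiLp.inner_apply]
      simp [hqdef, Fintype.sum_sum_type, RCLike.inner_apply, htdef]
    have htpos : 0 < t := by
      rw [hyq] at hy2; linarith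
    refine ⟨fun j => -(y (Sum.inl j)) / t, fun i => ?_⟩
    have h1 : 0 ≤ ⟪v i, y⟫_ℝ := hy1 i
    rw [PiLp.inner_apply] at h1
    simp only [RCLike.inner_apply, conj_trivial, Fintype.sum_sum_type, hv, PiLp.toLp_apply, Sum.elim_inl,
      Sum.elim_inr, Fintype.sum_unique] at h1
    -- h1 : 0 ≤ ∑ j, M i j * y (inl j) + b i * t  (mod commutation)
    have h2 : M.mulVec (fun j => -(y (Sum.inl j)) / t) i
        = (∑ j, M i j * (-(y (Sum.inl j)))) / t := by
      simp [Matrix.mulVec, dotProduct, div_eq_mul_inv, Finset.sum_mul, mul_assoc]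
    rw [h2, div_le_iff₀ htpos]
    have h3 : ∑ j, M i j * (-(y (Sum.inl j))) = -∑ j, M i j * y (Sum.inl j) := by
      simp [Finset.sum_neg_distrib]
    rw [h3]
    have h4 : ∑ a, y (Sum.inl a) * M i a = ∑ j, M i j * y (Sum.inl j) :=
      Finset.sum_congr rfl fun j _ => mul_comm _ _
    have hd : y (Sum.inr default) * b i = b i * t := by rw [mul_comm]
    nlinarith [h1, h4, hd]

/-- Lemma 2: compatibility of the CLF `V` and CBF `h` is equivalent to
emptiness of the Farkas dual set, where `Λ x` stacks `L_gV x`, `-L_gh x`, `A`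
and `ξ x` stacks `-κ_V(V x) - L_fV x`, `κ_h(h x) + L_fh x`, `c`. -/
theorem compatibility_iff_farkas_set_empty {nx nu p : ℕ}
    (V h : (Fin nx → ℝ) → ℝ) (κV κh : ℝ → ℝ)
    (LfV Lfh : (Fin nx → ℝ) → ℝ) (LgV Lgh : (Fin nx → ℝ) → Fin nu → ℝ)
    (A : Matrix (Fin p) (Fin nu) ℝ) (c : Fin p → ℝ)
    (Λ : (Fin nx → ℝ) → Matrix (Fin 2 ⊕ Fin p) (Fin nu) ℝ)
    (ξ : (Fin nx → ℝ) → (Fin 2 ⊕ Fin p) → ℝ)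
    (hΛ : ∀ x, Λ x = Sum.elim ![LgV x, fun j => -Lgh x j] A)
    (hξ : ∀ x, ξ x = Sum.elim ![-κV (V x) - LfV x, κh (h x) + Lfh x] c) :
    (∀ x : Fin nx → ℝ, h x ≥ 0 → V x ≤ 1 →
      ∃ u : Fin nu → ℝ, (∀ i, A.mulVec u i ≤ c i) ∧
        LfV x + LgV x ⬝ᵥ u ≤ -κV (V x) ∧
        Lfh x + Lgh x ⬝ᵥ u ≥ -κh (h x)) ↔
      ¬ ∃ (x : Fin nx → ℝ) (z : (Fin 2 ⊕ Fin p) → ℝ),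
        h x ≥ 0 ∧ V x ≤ 1 ∧ (∀ i, 0 ≤ z i) ∧
        Matrix.vecMul z (Λ x) = 0 ∧ ξ x ⬝ᵥ z = -1 := by
  have hneg : ∀ x (u : Fin nu → ℝ), (fun j => -Lgh x j) ⬝ᵥ u = -(Lgh x ⬝ᵥ u) := by
    intro x u
    simp [dotProduct]
  have key : ∀ x (u : Fin nu → ℝ), (∀ i, (Λ x).mulVec u i ≤ ξ x i) ↔
      ((∀ i, A.mulVec u i ≤ c i) ∧ LfV x + LgV x ⬝ᵥ u ≤ -κV (V x) ∧
        Lfh x + Lgh x ⬝ᵥ u ≥ -κh (h x)) := by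
    intro x u
    rw [hΛ, hξ]
    constructor
    · intro hi
      refine ⟨fun i => hi (Sum.inr i), ?_, ?_⟩
      · have : LgV x ⬝ᵥ u ≤ -κV (V x) - LfV x := hi (Sum.inl 0)
        linarith
      · have h4 : (fun j => -Lgh x j) ⬝ᵥ u ≤ κh (h x) + Lfh x := by
          exact hi (Sum.inl 1)
        rw [hneg x u] at h4
        linarith
    · rintro ⟨h1, h2, h3⟩ i
      rcases i with j | j
      · fin_cases j
        · show LgV x ⬝ᵥ u ≤ -κV (V x) - LfV x
          linarith
        · show (fun j => -Lgh x j) ⬝ᵥ u ≤ κh (h x) + Lfh x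
          rw [hneg x u]
          linarith
      · exact h1 j
  constructor
  · rintro hcompat ⟨x, z, hh, hV, hz0, hzL, hxz⟩
    obtain ⟨u, h1, h2, h3⟩ := hcompat x hh hV
    exact (farkas_mulVec (Λ x) (ξ x)).mp ⟨u, (key x u).mpr ⟨h1, h2, h3⟩⟩ ⟨z, hz0, hzL, hxz⟩
  · intro hemp x hh hV
    obtain ⟨u, hu⟩ := (farkas_mulVec (Λ x) (ξ x)).mpr
      (fun ⟨z, hz0, hzL, hxz⟩ => hemp ⟨x, z, hh, hV, hz0, hzL, hxz⟩)
    exact ⟨u, (key x u).mp hu⟩
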